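/- Let G=(V,E) be a finite connected undirected graph with positive conductances and marked vertex b. Under the probability measure P on two-component spanning forests proportional to weight, the expected number of vertices of the floating component satisfies E(|Σ|) = ℓ*·(|V|/(|V|−1))·R, where ℓ* = κ(G)(|V|−1)/κ₂(G) and R = (1/|V|)·Σ_{v∈V} G_{v,v}. Equivalently, E(|Σ|) = (κ(G)/κ₂(G))·Σ_{v∈V} G_{v,v}. -/

import Mathlib

open scoped Classical BigOperators

noncomputable section

namespace TwoSF

variable {V : Type*} [Fintype V] [DecidableEq V]

/-- `u` and `v` are linked by the edges in `B`. -/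
def Linked (B : Finset (Sym2 V)) : V → V → Prop :=
  Relation.ReflTransGen fun a b => s(a, b) ∈ B

/-- The number of connected components of the spanning subgraph `(V, B)`. -/
def ncomp (B : Finset (Sym2 V)) : ℕ :=
  Nat.card (Quot (Linked B))

/-- `B` is a spanning forest of the complete graph on `V` with exactly `k`
connected components: it has `k` components and, by the rank count
`|B| + k = |V|`, it is acyclic (in particular it contains no loop edge).
Taking `k = 1` gives spanning trees, `k = 2` gives two-component spanning
forests (2SF). -/
def IsSF (k : ℕ) (B : Finset (Sym2 V)) : Prop :=
  ncomp B = k ∧ B.card + k = Fintype.card V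

/-- The weight of an edge set: the product of its conductances. -/
def wt (c : Sym2 V → ℝ) (B : Finset (Sym2 V)) : ℝ := ∏ e ∈ B, c e

/-- κ: the weighted sum of spanning trees.  Edge sets containing a non-edge
(an `e` with `c e = 0`) contribute weight `0`, so this is the weighted number
of spanning trees of the graph whose edges are the support of `c`. -/
def kappa1 (c : Sym2 V → ℝ) : ℝ := ∑ B ∈ Finset.univ.filter (IsSF 1), wt c B

/-- κ₂: the weighted sum of two-component spanning forests. -/
def kappa2 (c : Sym2 V → ℝ) : ℝ := ∑ B ∈ Finset.univ.filter (IsSF 2), wt c B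

/-- The floating component of `B`: the set of vertices not linked to `b`. -/
def floating (b : V) (B : Finset (Sym2 V)) : Finset V :=
  Finset.univ.filter fun v => ¬ Linked B b v

/-- The graph Laplacian `Δ` of the graph with conductances `c`. -/
def lap (c : Sym2 V → ℝ) : Matrix V V ℝ := fun u v =>
  if u = v then ∑ w ∈ Finset.univ.filter (· ≠ u), c s(u, w) else -c s(u, v)

/-- The Dirichlet Laplacian `Δ_D`, indexed by `V \ {b}`. -/
def dlap (c : Sym2 V → ℝ) (b : V) : Matrix {w : V // w ≠ b} {w : V // w ≠ b} ℝ :=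
  Matrix.of fun p q => lap c p.1 q.1

/-- The Green function with Dirichlet boundary condition at `b` (the inverse of
the Dirichlet Laplacian), with the convention that it vanishes as soon as one
of its arguments is `b`. -/
def green (c : Sym2 V → ℝ) (b : V) (u v : V) : ℝ :=
  if hu : u = b then 0 else if hv : v = b then 0 else (dlap c b)⁻¹ ⟨u, hu⟩ ⟨v, hv⟩

/-- The probability of the event `p` under the probability measure on
two-component spanning forests assigning to each 2SF a probability
proportional to its weight. -/
def pr2 (c : Sym2 V → ℝ) (p : Finset (Sym2 V) → Prop) : ℝ :=
  (∑ B ∈ Finset.univ.filter (fun B => IsSF 2 B ∧ p B), wt c B) / kappa2 c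

/-- The expectation of `((floating b B).card : ℝ) ^ k`, i.e. of `|Σ|^k`, under
the probability measure on two-component spanning forests proportional to
weight. -/
def expPow (c : Sym2 V → ℝ) (b : V) (k : ℕ) : ℝ :=
  (∑ B ∈ Finset.univ.filter (IsSF 2), wt c B * ((floating b B).card : ℝ) ^ k) / kappa2 c

/-- `|∂Σ|`: the sum of the conductances of the edges having exactly one
endpoint in the floating component of `B`. -/
def bdryWt (c : Sym2 V → ℝ) (b : V) (B : Finset (Sym2 V)) : ℝ :=
  ∑ u ∈ floating b B, ∑ v ∈ (floating b B)ᶜ, c s(u, v)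

/-- The expectation of `|∂Σ|` under the probability measure on two-component
spanning forests proportional to weight. -/
def expBdry (c : Sym2 V → ℝ) (b : V) : ℝ :=
  (∑ B ∈ Finset.univ.filter (IsSF 2), wt c B * bdryWt c b B) / kappa2 c

set_option linter.unusedSectionVars false

section Lemmas
variable {B B' T : Finset (Sym2 V)} {x y a z u v w p q : V}

set_option linter.unusedSectionVars false

variable {B B' : Finset (Sym2 V)} {x y a z u v w : V}

lemma linked_refl (B : Finset (Sym2 V)) (x : V) : Linked B x x := Relation.ReflTransGen.refl

lemma linked_of_mem (h : s(x, y) ∈ B) : Linked B x y := Relation.ReflTransGen.single h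

lemma linked_symm : Symmetric (Linked B) :=
  by
    haveI : Std.Symm (fun a b : V => s(a, b) ∈ B) := ⟨fun a b h => by rwa [Sym2.eq_swap] at h⟩
    unfold Linked
    exact fun a b h => Std.Symm.symm a b h

lemma Linked.symm (h : Linked B x y) : Linked B y x := linked_symm h

lemma Linked.trans (h : Linked B x y) (h' : Linked B y z) : Linked B x z :=
  Relation.ReflTransGen.trans h h'

lemma linked_equivalence (B : Finset (Sym2 V)) : Equivalence (Linked B) :=
  ⟨fun x => linked_refl B x, Linked.symm, Linked.trans⟩

lemma linked_mono (hBB : B ⊆ B') (h : Linked B x y) : Linked B' x y :=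
  Relation.ReflTransGen.mono (fun _ _ hm => hBB hm) _ _ h

lemma linked_insert_iff :
    Linked (insert s(x, y) B) a z ↔
      Linked B a z ∨ (Linked B a x ∧ Linked B y z) ∨ (Linked B a y ∧ Linked B x z) := by
  constructor
  · intro h
    induction h using Relation.ReflTransGen.head_induction_on with
    | refl => exact Or.inl (linked_refl B z)
    | head h' _ ih =>
      rename_i p q _
      rcases Finset.mem_insert.mp h' with heq | hmem
      · rw [Sym2.eq_iff] at heq
        rcases heq with ⟨hp, hq⟩ | ⟨hp, hq⟩
        · rw [hp]; rw [hq] at ih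
          rcases ih with h1 | ⟨h1, h2⟩ | ⟨h1, h2⟩
          · exact Or.inr (Or.inl ⟨linked_refl B x, h1⟩)
          · exact Or.inr (Or.inl ⟨linked_refl B x, h2⟩)
          · exact Or.inl h2
        · rw [hp]; rw [hq] at ih
          rcases ih with h1 | ⟨h1, h2⟩ | ⟨h1, h2⟩
          · exact Or.inr (Or.inr ⟨linked_refl B y, h1⟩)
          · exact Or.inl h2
          · exact Or.inr (Or.inr ⟨linked_refl B y, h2⟩)
      · have hpq : Linked B p q := linked_of_mem hmem
        rcases ih with h1 | ⟨h1, h2⟩ | ⟨h1, h2⟩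
        · exact Or.inl (hpq.trans h1)
        · exact Or.inr (Or.inl ⟨hpq.trans h1, h2⟩)
        · exact Or.inr (Or.inr ⟨hpq.trans h1, h2⟩)
  · have hsub : B ⊆ insert s(x, y) B := Finset.subset_insert _ _
    have hxy : Linked (insert s(x, y) B) x y :=
      linked_of_mem (Finset.mem_insert_self _ _)
    rintro (h | ⟨h1, h2⟩ | ⟨h1, h2⟩)
    · exact linked_mono hsub h
    · exact ((linked_mono hsub h1).trans hxy).trans (linked_mono hsub h2)
    · exact ((linked_mono hsub h1).trans hxy.symm).trans (linked_mono hsub h2)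

lemma linked_erase_decomp (he : s(x, y) ∈ B) (h : Linked B a z)
    (hnot : ¬ Linked (B.erase s(x, y)) a z) :
    (Linked (B.erase s(x, y)) a x ∧ Linked (B.erase s(x, y)) y z) ∨
      (Linked (B.erase s(x, y)) a y ∧ Linked (B.erase s(x, y)) x z) := by
  have hB : B = insert s(x, y) (B.erase s(x, y)) := (Finset.insert_erase he).symm
  rw [hB] at h
  rcases linked_insert_iff.mp h with h1 | h1 | h1
  · exact absurd h1 hnot
  · exact Or.inl h1
  · exact Or.inr h1

lemma quot_mk_eq_iff (B : Finset (Sym2 V)) (a z : V) :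
    Quot.mk (Linked B) a = Quot.mk (Linked B) z ↔ Linked B a z := by
  rw [Quot.eq, Equivalence.eqvGen_iff (linked_equivalence B)]

lemma linked_funext (h : ∀ a z : V, Linked B a z ↔ Linked B' a z) : Linked B = Linked B' := by
  funext a z; exact propext (h a z)

lemma ncomp_congr (h : ∀ a z : V, Linked B a z ↔ Linked B' a z) : ncomp B = ncomp B' := by
  unfold ncomp; rw [linked_funext h]

lemma linked_insert_of_linked (hxy : Linked B x y) (a z : V) :
    Linked (insert s(x, y) B) a z ↔ Linked B a z := by
  rw [linked_insert_iff]
  constructor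
  · rintro (h | ⟨h1, h2⟩ | ⟨h1, h2⟩)
    · exact h
    · exact (h1.trans hxy).trans h2
    · exact (h1.trans hxy.symm).trans h2
  · exact Or.inl

lemma ncomp_insert_of_linked (hxy : Linked B x y) :
    ncomp (insert s(x, y) B) = ncomp B :=
  ncomp_congr (linked_insert_of_linked hxy)

lemma linked_insert_loop (x : V) (a z : V) :
    Linked (insert s(x, x) B) a z ↔ Linked B a z := by
  rw [linked_insert_iff]
  constructor
  · rintro (h | ⟨h1, h2⟩ | ⟨h1, h2⟩) <;> first | exact h | exact h1.trans h2
  · exact Or.inl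

lemma ncomp_insert_of_not_linked (hxy : ¬ Linked B x y) :
    ncomp (insert s(x, y) B) + 1 = ncomp B := by
  classical
  set r := Linked B
  set B' := insert s(x, y) B with hB'
  have hmonol : ∀ a z : V, Linked B a z → Linked B' a z :=
    fun a z h => linked_mono (Finset.subset_insert _ _) h
  -- the natural map
  let f : {q : Quot r // q ≠ Quot.mk r y} → Quot (Linked B') :=
    fun q => Quot.map id hmonol q.1
  have hmk : ∀ a : V, Quot.map id hmonol (Quot.mk r a) = Quot.mk (Linked B') a :=
    fun a => rfl
  have hinj : Function.Injective f := by
    rintro ⟨q1, hq1⟩ ⟨q2, hq2⟩ h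
    induction q1 using Quot.ind with | _ a =>
    induction q2 using Quot.ind with | _ c =>
    simp only [f, hmk] at h
    rw [quot_mk_eq_iff] at h
    have : Linked B a c := by
      rcases linked_insert_iff.mp h with h1 | ⟨h1, h2⟩ | ⟨h1, h2⟩
      · exact h1
      · exact absurd ((quot_mk_eq_iff B c y).mpr h2.symm) hq2
      · exact absurd ((quot_mk_eq_iff B a y).mpr h1) hq1
    exact Subtype.ext ((quot_mk_eq_iff B a c).mpr this)
  have hsurj : Function.Surjective f := by
    intro q
    induction q using Quot.ind with | _ a =>
    by_cases hay : Linked B a y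
    · refine ⟨⟨Quot.mk r x, ?_⟩, ?_⟩
      · intro hcon
        exact hxy ((quot_mk_eq_iff B x y).mp hcon)
      · show Quot.map id hmonol (Quot.mk r x) = _
        rw [hmk, quot_mk_eq_iff]
        have hxyB' : Linked B' x y := linked_of_mem (Finset.mem_insert_self _ _)
        exact hxyB'.trans (hmonol _ _ hay.symm)
    · refine ⟨⟨Quot.mk r a, ?_⟩, ?_⟩
      · intro hcon
        exact hay ((quot_mk_eq_iff B a y).mp hcon)
      · rfl
  have hcard : Nat.card (Quot (Linked B')) = Nat.card {q : Quot r // q ≠ Quot.mk r y} :=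
    (Nat.card_eq_of_bijective f ⟨hinj, hsurj⟩).symm
  letI : Fintype (Quot r) := Fintype.ofFinite _
  have h1 : Nat.card {q : Quot r // q ≠ Quot.mk r y} = Fintype.card (Quot r) - 1 := by
    rw [Nat.card_eq_fintype_card]
    have := Fintype.card_subtype_compl (fun q : Quot r => q = Quot.mk r y)
    simpa [Fintype.card_subtype_eq] using this
  have hpos : 1 ≤ Fintype.card (Quot r) := Fintype.card_pos_iff.mpr ⟨Quot.mk r y⟩
  show Nat.card (Quot (Linked B')) + 1 = Nat.card (Quot r)
  rw [hcard, h1, Nat.sub_add_cancel hpos, Nat.card_eq_fintype_card]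

lemma ncomp_empty : ncomp (∅ : Finset (Sym2 V)) = Fintype.card V := by
  have hiff : ∀ a z : V, Linked (∅ : Finset (Sym2 V)) a z ↔ z = a := by
    intro a z
    exact Relation.reflTransGen_iff_eq (fun b h => by simp at h)
  have : Function.Bijective (Quot.mk (Linked (∅ : Finset (Sym2 V)))) := by
    constructor
    · intro a c h
      exact ((hiff a c).mp ((quot_mk_eq_iff _ a c).mp h)).symm
    · exact Quot.mk_surjective
  unfold ncomp
  rw [← Nat.card_eq_fintype_card]
  exact (Nat.card_eq_of_bijective _ this).symm

lemma rank_ineq (B : Finset (Sym2 V)) : Fintype.card V ≤ B.card + ncomp B := by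
  classical
  induction B using Finset.induction_on with
  | empty => simp [ncomp_empty]
  | @insert e s hnot ih =>
    induction e using Sym2.ind with | _ x y =>
    rw [Finset.card_insert_of_notMem hnot]
    by_cases hxy : Linked s x y
    · rw [ncomp_insert_of_linked hxy]
      omega
    · have := ncomp_insert_of_not_linked hxy
      omega
lemma linked_all_of_ncomp_one (h : ncomp B = 1) (x y : V) : Linked B x y := by
  have := (Nat.card_eq_one_iff_unique.mp h).1
  exact (quot_mk_eq_iff B x y).mp (Subsingleton.elim _ _)

lemma forest_rank (H : ∀ e ∈ B, ∀ x y : V, e = s(x, y) → ¬ Linked (B.erase e) x y) :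
    B.card + ncomp B = Fintype.card V := by
  classical
  induction B using Finset.induction_on with
  | empty => simp [ncomp_empty]
  | @insert e s hnot ih =>
    have hs : ∀ f ∈ s, ∀ x y : V, f = s(x, y) → ¬ Linked (s.erase f) x y := by
      intro f hf x y hfxy hl
      exact H f (Finset.mem_insert_of_mem hf) x y hfxy
        (linked_mono (Finset.erase_subset_erase _ (Finset.subset_insert _ _)) hl)
    induction e using Sym2.ind with | _ x y =>
    have hnl : ¬ Linked s x y := by
      have := H s(x, y) (Finset.mem_insert_self _ _) x y rfl
      rwa [Finset.erase_insert hnot] at this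
    have hn := ncomp_insert_of_not_linked hnl
    rw [Finset.card_insert_of_notMem hnot]
    have := ih hs
    omega

lemma sf_no_loop {k : ℕ} (h : IsSF k B) (x : V) : s(x, x) ∉ B := by
  intro hmem
  have hcongr : ncomp (B.erase s(x, x)) = ncomp B := by
    refine ncomp_congr fun a z => ?_
    constructor
    · exact linked_mono (Finset.erase_subset _ _)
    · intro hl
      rw [← Finset.insert_erase hmem] at hl
      exact (linked_insert_loop x a z).mp hl
  have hr := rank_ineq (B.erase s(x, x))
  rw [Finset.card_erase_of_mem hmem, hcongr] at hr
  have hcard : 1 ≤ B.card := Finset.card_pos.mpr ⟨_, hmem⟩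
  obtain ⟨h1, h2⟩ := h
  have hk : 1 ≤ k := by
    have hpos : 0 < ncomp B := by
      have : Nonempty (Quot (Linked B)) := ⟨Quot.mk _ x⟩
      exact Nat.card_pos
    omega
  omega

lemma tree_linked (hT : IsSF 1 B) (x y : V) : Linked B x y :=
  linked_all_of_ncomp_one hT.1 x y

lemma tree_bridge (hT : IsSF 1 B) (hm : s(u, w) ∈ B) : ¬ Linked (B.erase s(u, w)) u w := by
  intro hl
  have hcongr : ncomp (B.erase s(u, w)) = ncomp B := by
    refine (ncomp_congr fun a z => ?_).symm
    constructor
    · intro h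
      rw [← Finset.insert_erase hm] at h
      exact (linked_insert_of_linked hl a z).mp h
    · exact linked_mono (Finset.erase_subset _ _)
  have hr := rank_ineq (B.erase s(u, w))
  rw [Finset.card_erase_of_mem hm, hcongr, hT.1] at hr
  have hcard : 1 ≤ B.card := Finset.card_pos.mpr ⟨_, hm⟩
  have := hT.2
  omega

lemma tree_erase_2sf (hT : IsSF 1 B) (hm : s(x, y) ∈ B) : IsSF 2 (B.erase s(x, y)) := by
  have hnl : ¬ Linked (B.erase s(x, y)) x y := tree_bridge hT hm
  have hn := ncomp_insert_of_not_linked hnl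
  rw [Finset.insert_erase hm, hT.1] at hn
  refine ⟨by omega, ?_⟩
  rw [Finset.card_erase_of_mem hm]
  have hcard : 1 ≤ B.card := Finset.card_pos.mpr ⟨_, hm⟩
  have := hT.2
  omega

lemma twosf_insert_tree (h2 : IsSF 2 B) (hnl : ¬ Linked B x y) : IsSF 1 (insert s(x, y) B) := by
  have hnm : s(x, y) ∉ B := fun hm => hnl (linked_of_mem hm)
  have hn := ncomp_insert_of_not_linked hnl
  rw [h2.1] at hn
  refine ⟨by omega, ?_⟩
  rw [Finset.card_insert_of_notMem hnm]
  have := h2.2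
  omega

lemma tree_dichotomy (hT : IsSF 1 B) (hm : s(u, w) ∈ B) (z : V) :
    Linked (B.erase s(u, w)) z u ∨ Linked (B.erase s(u, w)) z w := by
  by_cases hzu : Linked (B.erase s(u, w)) z u
  · exact Or.inl hzu
  · rcases linked_erase_decomp hm (tree_linked hT z u) hzu with ⟨h1, h2⟩ | ⟨h1, h2⟩
    · exact absurd h1 hzu
    · exact Or.inr h1

lemma twosf_linked_of_both_floating {b : V} (h2 : IsSF 2 B)
    (hp : ¬ Linked B b p) (hq : ¬ Linked B b q) : Linked B p q := by
  by_contra hpq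
  classical
  letI : Fintype (Quot (Linked B)) := Fintype.ofFinite _
  set r := Linked B
  have hd1 : Quot.mk r b ≠ Quot.mk r p := fun h => hp ((quot_mk_eq_iff B b p).mp h)
  have hd2 : Quot.mk r b ≠ Quot.mk r q := fun h => hq ((quot_mk_eq_iff B b q).mp h)
  have hd3 : Quot.mk r p ≠ Quot.mk r q := fun h => hpq ((quot_mk_eq_iff B p q).mp h)
  have hle : ({Quot.mk r b, Quot.mk r p, Quot.mk r q} : Finset (Quot r)).card ≤
      Fintype.card (Quot r) := Finset.card_le_univ _
  rw [Finset.card_insert_of_notMem (by simp [hd1, hd2]),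
    Finset.card_insert_of_notMem (by simp [hd3]), Finset.card_singleton] at hle
  have : ncomp B = Fintype.card (Quot r) := Nat.card_eq_fintype_card
  rw [h2.1] at this
  omega

lemma exists_nbr_toward : ∀ (B : Finset (Sym2 V)) {u t : V}, Linked B u t → t ≠ u →
    ∃ w, s(u, w) ∈ B ∧ Linked (B.erase s(u, w)) w t := by
  intro B
  induction B using Finset.strongInductionOn with | _ B ih =>
  intro u t hlink htu
  rcases Relation.ReflTransGen.cases_head hlink with heq | ⟨w, hstep, hrest⟩
  · exact absurd heq.symm htu
  · by_cases hcase : Linked (B.erase s(u, w)) w t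
    · exact ⟨w, hstep, hcase⟩
    · have hut : Linked (B.erase s(u, w)) u t := by
        rcases linked_erase_decomp hstep hrest hcase with ⟨h1, h2⟩ | ⟨h1, h2⟩
        · exact absurd h2 hcase
        · exact h2
      have hsub : B.erase s(u, w) ⊂ B := Finset.erase_ssubset hstep
      obtain ⟨w', hmem, hl⟩ := ih _ hsub hut htu
      refine ⟨w', Finset.mem_of_mem_erase hmem, ?_⟩
      exact linked_mono (Finset.erase_subset_erase _ (Finset.erase_subset _ _)) hl

lemma unique_nbr_toward (hT : IsSF 1 B) {u t w₁ w₂ : V}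
    (h1m : s(u, w₁) ∈ B) (h1 : Linked (B.erase s(u, w₁)) w₁ t)
    (h2m : s(u, w₂) ∈ B) (h2 : Linked (B.erase s(u, w₂)) w₂ t) : w₁ = w₂ := by
  by_contra hne
  have hloop1 : u ≠ w₁ := fun h => sf_no_loop hT u (h ▸ h1m)
  have hloop2 : u ≠ w₂ := fun h => sf_no_loop hT u (h ▸ h2m)
  have hee : s(u, w₁) ≠ s(u, w₂) := by
    intro h
    rw [Sym2.eq_iff] at h
    rcases h with ⟨-, h⟩ | ⟨h, h'⟩
    · exact hne h
    · exact hne (h'.trans h)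
  set U := (B.erase s(u, w₁)).erase s(u, w₂) with hU
  have hU' : (B.erase s(u, w₂)).erase s(u, w₁) = U := Finset.erase_right_comm
  have hb1 : ¬ Linked (B.erase s(u, w₁)) u w₁ := tree_bridge hT h1m
  have hb2 : ¬ Linked (B.erase s(u, w₂)) u w₂ := tree_bridge hT h2m
  have hm2' : s(u, w₂) ∈ B.erase s(u, w₁) := Finset.mem_erase.mpr ⟨hee.symm, h2m⟩
  have hm1' : s(u, w₁) ∈ B.erase s(u, w₂) := Finset.mem_erase.mpr ⟨hee, h1m⟩
  have hUsub1 : U ⊆ B.erase s(u, w₁) := Finset.erase_subset _ _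
  have hUsub2 : U ⊆ B.erase s(u, w₂) := hU' ▸ Finset.erase_subset _ _
  have key : Linked U w₁ w₂ := by
    have hc1 : Linked U w₁ t ∨ Linked U w₁ w₂ := by
      by_cases hA : Linked U w₁ t
      · exact Or.inl hA
      · rcases linked_erase_decomp hm2' h1 hA with ⟨ha, hb⟩ | ⟨ha, hb⟩
        · exact absurd (linked_mono hUsub1 ha).symm hb1
        · exact Or.inr ha
    have hc2 : Linked U w₂ t ∨ Linked U w₂ w₁ := by
      rw [← hU']
      by_cases hA : Linked ((B.erase s(u, w₂)).erase s(u, w₁)) w₂ t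
      · exact Or.inl hA
      · rcases linked_erase_decomp hm1' h2 hA with ⟨ha, hb⟩ | ⟨ha, hb⟩
        · exact absurd (linked_mono (Finset.erase_subset _ _) ha).symm hb2
        · exact Or.inr ha
    rcases hc1 with h1' | h1'
    · rcases hc2 with h2' | h2'
      · exact h1'.trans h2'.symm
      · exact h2'.symm
    · exact h1'
  have : Linked (B.erase s(u, w₁)) u w₁ :=
    (linked_of_mem hm2').trans ((linked_mono hUsub1 key).symm)
  exact hb1 this
lemma card_nbr_toward (hT : IsSF 1 B) {u t : V} (htu : t ≠ u) :
    (Finset.univ.filter fun w : V =>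
      s(u, w) ∈ B ∧ Linked (B.erase s(u, w)) w t).card = 1 := by
  obtain ⟨w₀, hm, hl⟩ := exists_nbr_toward B (tree_linked hT u t) htu
  rw [Finset.card_eq_one]
  refine ⟨w₀, ?_⟩
  ext w
  simp only [Finset.mem_filter, Finset.mem_univ, true_and, Finset.mem_singleton]
  constructor
  · rintro ⟨h1, h2⟩
    exact unique_nbr_toward hT h1 h2 hm hl
  · rintro rfl
    exact ⟨hm, hl⟩

lemma card_nbr_toward_self (hT : IsSF 1 B) (u : V) :
    (Finset.univ.filter fun w : V =>
      s(u, w) ∈ B ∧ Linked (B.erase s(u, w)) w u).card = 0 := by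
  rw [Finset.card_eq_zero]
  ext w
  simp only [Finset.mem_filter, Finset.mem_univ, true_and, Finset.notMem_empty, iff_false]
  rintro ⟨h1, h2⟩
  exact tree_bridge hT h1 h2.symm

lemma tree_count (hT : IsSF 1 B) {u v b : V} (hub : u ≠ b) :
    ((Finset.univ.filter fun w : V => s(u, w) ∈ B ∧ Linked (B.erase s(u, w)) w b ∧
        ¬ Linked (B.erase s(u, w)) w v).card : ℝ) -
      ((Finset.univ.filter fun w : V => s(u, w) ∈ B ∧ ¬ Linked (B.erase s(u, w)) w b ∧
        Linked (B.erase s(u, w)) w v).card : ℝ) =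
      if u = v then 1 else 0 := by
  classical
  set P := Finset.univ.filter fun w : V => s(u, w) ∈ B ∧ Linked (B.erase s(u, w)) w b with hP
  set Q := Finset.univ.filter fun w : V => s(u, w) ∈ B ∧ Linked (B.erase s(u, w)) w v with hQ
  have hA : (Finset.univ.filter fun w : V => s(u, w) ∈ B ∧ Linked (B.erase s(u, w)) w b ∧
      ¬ Linked (B.erase s(u, w)) w v) = P \ Q := by
    ext w
    simp only [hP, hQ, Finset.mem_sdiff, Finset.mem_filter, Finset.mem_univ, true_and]
    tauto
  have hD : (Finset.univ.filter fun w : V => s(u, w) ∈ B ∧ ¬ Linked (B.erase s(u, w)) w b ∧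
      Linked (B.erase s(u, w)) w v) = Q \ P := by
    ext w
    simp only [hP, hQ, Finset.mem_sdiff, Finset.mem_filter, Finset.mem_univ, true_and]
    tauto
  have hPcard : P.card = 1 := card_nbr_toward hT (Ne.symm hub)
  have hQcard : Q.card = if u = v then 0 else 1 := by
    by_cases huv : u = v
    · rw [if_pos huv, hQ, ← huv]
      exact card_nbr_toward_self hT u
    · rw [if_neg huv]
      exact card_nbr_toward hT (Ne.symm huv)
  have e1 := Finset.card_sdiff_add_card_inter P Q
  have e2 := Finset.card_sdiff_add_card_inter Q P
  rw [Finset.inter_comm Q P] at e2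
  rw [hA, hD]
  by_cases huv : u = v
  · rw [if_pos huv]; rw [if_pos huv] at hQcard
    have : (Q \ P).card = 0 := by omega
    rw [this]
    have : (P \ Q).card = 1 := by omega
    rw [this]; norm_num
  · rw [if_neg huv]; rw [if_neg huv] at hQcard
    have h3 : (P \ Q).card = (Q \ P).card := by omega
    rw [h3]; ring

def Hfun (c : Sym2 V → ℝ) (b w v : V) : ℝ :=
  ∑ B ∈ Finset.univ.filter (IsSF 2),
    if ¬ Linked B b w ∧ ¬ Linked B b v then wt c B else 0

lemma sumA (c : Sym2 V → ℝ) (b u v : V) :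
    ∑ p ∈ (Finset.univ : Finset (Finset (Sym2 V) × V)).filter
        (fun p => IsSF 2 p.1 ∧ p.2 ≠ u ∧ ¬ Linked p.1 b u ∧ ¬ Linked p.1 b v ∧
          Linked p.1 b p.2),
      c s(u, p.2) * wt c p.1 =
    ∑ p ∈ (Finset.univ : Finset (Finset (Sym2 V) × V)).filter
        (fun p => IsSF 1 p.1 ∧ s(u, p.2) ∈ p.1 ∧ Linked (p.1.erase s(u, p.2)) p.2 b ∧
          ¬ Linked (p.1.erase s(u, p.2)) p.2 v),
      wt c p.1 := by
  classical
  refine Finset.sum_bij' (fun p _ => (insert s(u, p.2) p.1, p.2))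
    (fun p _ => (p.1.erase s(u, p.2), p.2)) ?_ ?_ ?_ ?_ ?_
  · rintro ⟨B, w⟩ hm
    simp only [Finset.mem_filter, Finset.mem_univ, true_and] at hm ⊢
    obtain ⟨h2, hwu, hbu, hbv, hbw⟩ := hm
    have hcross : ¬ Linked B u w := fun h => hbu (hbw.trans h.symm)
    have hnm : s(u, w) ∉ B := fun h => hcross (linked_of_mem h)
    have her : (insert s(u, w) B).erase s(u, w) = B := Finset.erase_insert hnm
    refine ⟨twosf_insert_tree h2 hcross, Finset.mem_insert_self _ _, ?_, ?_⟩
    · rw [her]; exact hbw.symm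
    · rw [her]; exact fun h => hbv (hbw.trans h)
  · rintro ⟨T, w⟩ hm
    simp only [Finset.mem_filter, Finset.mem_univ, true_and] at hm ⊢
    obtain ⟨h1, hmem, hwb, hwv⟩ := hm
    have hbridge := tree_bridge h1 hmem
    refine ⟨tree_erase_2sf h1 hmem, ?_, ?_, ?_, hwb.symm⟩
    · rintro rfl; exact sf_no_loop h1 w hmem
    · exact fun h => hbridge (h.symm.trans hwb.symm)
    · exact fun h => hwv (hwb.trans h)
  · rintro ⟨B, w⟩ hm
    simp only [Finset.mem_filter, Finset.mem_univ, true_and] at hm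
    obtain ⟨h2, hwu, hbu, hbv, hbw⟩ := hm
    have hcross : ¬ Linked B u w := fun h => hbu (hbw.trans h.symm)
    have hnm : s(u, w) ∉ B := fun h => hcross (linked_of_mem h)
    simp [Finset.erase_insert hnm]
  · rintro ⟨T, w⟩ hm
    simp only [Finset.mem_filter, Finset.mem_univ, true_and] at hm
    simp [Finset.insert_erase hm.2.1]
  · rintro ⟨B, w⟩ hm
    simp only [Finset.mem_filter, Finset.mem_univ, true_and] at hm
    obtain ⟨h2, hwu, hbu, hbv, hbw⟩ := hm
    have hcross : ¬ Linked B u w := fun h => hbu (hbw.trans h.symm)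
    have hnm : s(u, w) ∉ B := fun h => hcross (linked_of_mem h)
    show c s(u, w) * wt c B = wt c (insert s(u, w) B)
    rw [wt, wt, Finset.prod_insert hnm]

lemma sumD (c : Sym2 V → ℝ) (b u v : V) :
    ∑ p ∈ (Finset.univ : Finset (Finset (Sym2 V) × V)).filter
        (fun p => IsSF 2 p.1 ∧ p.2 ≠ u ∧ Linked p.1 b u ∧ ¬ Linked p.1 b v ∧
          ¬ Linked p.1 b p.2),
      c s(u, p.2) * wt c p.1 =
    ∑ p ∈ (Finset.univ : Finset (Finset (Sym2 V) × V)).filter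
        (fun p => IsSF 1 p.1 ∧ s(u, p.2) ∈ p.1 ∧ ¬ Linked (p.1.erase s(u, p.2)) p.2 b ∧
          Linked (p.1.erase s(u, p.2)) p.2 v),
      wt c p.1 := by
  classical
  refine Finset.sum_bij' (fun p _ => (insert s(u, p.2) p.1, p.2))
    (fun p _ => (p.1.erase s(u, p.2), p.2)) ?_ ?_ ?_ ?_ ?_
  · rintro ⟨B, w⟩ hm
    simp only [Finset.mem_filter, Finset.mem_univ, true_and] at hm ⊢
    obtain ⟨h2, hwu, hbu, hbv, hbw⟩ := hm
    have hcross : ¬ Linked B u w := fun h => hbw (hbu.trans h)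
    have hnm : s(u, w) ∉ B := fun h => hcross (linked_of_mem h)
    have her : (insert s(u, w) B).erase s(u, w) = B := Finset.erase_insert hnm
    refine ⟨twosf_insert_tree h2 hcross, Finset.mem_insert_self _ _, ?_, ?_⟩
    · rw [her]; exact fun h => hbw (h.symm)
    · rw [her]; exact (twosf_linked_of_both_floating h2 hbv hbw).symm
  · rintro ⟨T, w⟩ hm
    simp only [Finset.mem_filter, Finset.mem_univ, true_and] at hm ⊢
    obtain ⟨h1, hmem, hwb, hwv⟩ := hm
    have hbridge := tree_bridge h1 hmem
    have hbu : Linked (T.erase s(u, w)) b u := by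
      rcases tree_dichotomy h1 hmem b with h | h
      · exact h
      · exact absurd h.symm hwb
    refine ⟨tree_erase_2sf h1 hmem, ?_, hbu, ?_, fun h => hwb h.symm⟩
    · rintro rfl; exact sf_no_loop h1 w hmem
    · exact fun h => hwb (hwv.trans h.symm)
  · rintro ⟨B, w⟩ hm
    simp only [Finset.mem_filter, Finset.mem_univ, true_and] at hm
    obtain ⟨h2, hwu, hbu, hbv, hbw⟩ := hm
    have hcross : ¬ Linked B u w := fun h => hbw (hbu.trans h)
    have hnm : s(u, w) ∉ B := fun h => hcross (linked_of_mem h)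
    simp [Finset.erase_insert hnm]
  · rintro ⟨T, w⟩ hm
    simp only [Finset.mem_filter, Finset.mem_univ, true_and] at hm
    simp [Finset.insert_erase hm.2.1]
  · rintro ⟨B, w⟩ hm
    simp only [Finset.mem_filter, Finset.mem_univ, true_and] at hm
    obtain ⟨h2, hwu, hbu, hbv, hbw⟩ := hm
    have hcross : ¬ Linked B u w := fun h => hbw (hbu.trans h)
    have hnm : s(u, w) ∉ B := fun h => hcross (linked_of_mem h)
    show c s(u, w) * wt c B = wt c (insert s(u, w) B)
    rw [wt, wt, Finset.prod_insert hnm]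

lemma core (c : Sym2 V → ℝ) (b u v : V) (hub : u ≠ b) :
    ∑ w : V, lap c u w * Hfun c b w v = if u = v then kappa1 c else 0 := by
  classical
  have hfe : Finset.univ.filter (fun w : V => w ≠ u) = Finset.univ.erase u := by
    ext w; simp [Finset.mem_erase]
  -- step 1: split off diagonal
  have hsplit : ∑ w : V, lap c u w * Hfun c b w v =
      ∑ w ∈ Finset.univ.filter (fun w : V => w ≠ u),
        c s(u, w) * (Hfun c b u v - Hfun c b w v) := by
    rw [← Finset.add_sum_erase Finset.univ (fun w => lap c u w * Hfun c b w v)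
      (Finset.mem_univ u), ← hfe]
    have hdiag : lap c u u = ∑ w ∈ Finset.univ.filter (· ≠ u), c s(u, w) := by
      simp [lap]
    have hoff : ∀ w ∈ Finset.univ.filter (fun w : V => w ≠ u),
        lap c u w = -c s(u, w) := by
      intro w hw
      simp only [Finset.mem_filter] at hw
      simp [lap, (Ne.symm hw.2 : ¬ u = w)]
    have h2 : ∑ w ∈ Finset.univ.filter (fun w : V => w ≠ u), lap c u w * Hfun c b w v =
        ∑ w ∈ Finset.univ.filter (fun w : V => w ≠ u), -(c s(u, w) * Hfun c b w v) :=
      Finset.sum_congr rfl fun w hw => by rw [hoff w hw]; ring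
    rw [hdiag, Finset.sum_mul, h2, ← Finset.sum_add_distrib]
    exact Finset.sum_congr rfl fun w hw => by ring
  rw [hsplit]
  -- step 2: expand Hfun differences into A and D indicator sums
  have hdiff : ∀ w : V, Hfun c b u v - Hfun c b w v =
      (∑ B ∈ Finset.univ.filter (IsSF 2),
        if ¬ Linked B b u ∧ ¬ Linked B b v ∧ Linked B b w then wt c B else 0) -
      (∑ B ∈ Finset.univ.filter (IsSF 2),
        if Linked B b u ∧ ¬ Linked B b v ∧ ¬ Linked B b w then wt c B else 0) := by
    intro w
    unfold Hfun
    rw [← Finset.sum_sub_distrib, ← Finset.sum_sub_distrib]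
    refine Finset.sum_congr rfl fun B _ => ?_
    by_cases h1 : Linked B b u <;> by_cases h2 : Linked B b v <;>
      by_cases h3 : Linked B b w <;> simp [h1, h2, h3]
  have hstep2 : ∑ w ∈ Finset.univ.filter (fun w : V => w ≠ u),
      c s(u, w) * (Hfun c b u v - Hfun c b w v) =
      (∑ w ∈ Finset.univ.filter (fun w : V => w ≠ u),
        ∑ B ∈ Finset.univ.filter (IsSF 2),
          if ¬ Linked B b u ∧ ¬ Linked B b v ∧ Linked B b w
            then c s(u, w) * wt c B else 0) -
      (∑ w ∈ Finset.univ.filter (fun w : V => w ≠ u),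
        ∑ B ∈ Finset.univ.filter (IsSF 2),
          if Linked B b u ∧ ¬ Linked B b v ∧ ¬ Linked B b w
            then c s(u, w) * wt c B else 0) := by
    rw [← Finset.sum_sub_distrib]
    refine Finset.sum_congr rfl fun w hw => ?_
    rw [hdiff w, mul_sub, Finset.mul_sum, Finset.mul_sum]
    congr 1 <;> exact Finset.sum_congr rfl fun B _ => (by split_ifs <;> ring)
  rw [hstep2]
  -- step 3: identify each double sum with a filtered product sum
  have hprodA : ∑ p ∈ (Finset.univ : Finset (Finset (Sym2 V) × V)).filter
        (fun p => IsSF 2 p.1 ∧ p.2 ≠ u ∧ ¬ Linked p.1 b u ∧ ¬ Linked p.1 b v ∧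
          Linked p.1 b p.2),
      c s(u, p.2) * wt c p.1 =
      ∑ w ∈ Finset.univ.filter (fun w : V => w ≠ u),
      ∑ B ∈ Finset.univ.filter (IsSF 2),
        (if ¬ Linked B b u ∧ ¬ Linked B b v ∧ Linked B b w
          then c s(u, w) * wt c B else 0) := by
    rw [Finset.sum_filter, Fintype.sum_prod_type, Finset.sum_comm, Finset.sum_filter]
    refine Finset.sum_congr rfl fun w _ => ?_
    rw [Finset.sum_filter]
    by_cases hw : w = u
    · simp [hw]
    · simp only [hw, if_pos (by exact hw : w ≠ u)]
      refine Finset.sum_congr rfl fun B _ => ?_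
      by_cases h2 : IsSF 2 B <;> simp [h2, hw]
  have hprodD : ∑ p ∈ (Finset.univ : Finset (Finset (Sym2 V) × V)).filter
        (fun p => IsSF 2 p.1 ∧ p.2 ≠ u ∧ Linked p.1 b u ∧ ¬ Linked p.1 b v ∧
          ¬ Linked p.1 b p.2),
      c s(u, p.2) * wt c p.1 =
      ∑ w ∈ Finset.univ.filter (fun w : V => w ≠ u),
      ∑ B ∈ Finset.univ.filter (IsSF 2),
        (if Linked B b u ∧ ¬ Linked B b v ∧ ¬ Linked B b w
          then c s(u, w) * wt c B else 0) := by
    rw [Finset.sum_filter, Fintype.sum_prod_type, Finset.sum_comm, Finset.sum_filter]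
    refine Finset.sum_congr rfl fun w _ => ?_
    rw [Finset.sum_filter]
    by_cases hw : w = u
    · simp [hw]
    · simp only [hw, if_pos (by exact hw : w ≠ u)]
      refine Finset.sum_congr rfl fun B _ => ?_
      by_cases h2 : IsSF 2 B <;> simp [h2, hw]
  rw [← hprodA, ← hprodD, sumA c b u v, sumD c b u v]
  -- step 4: tree-side sums as per-tree counts
  have htreeA : ∑ p ∈ (Finset.univ : Finset (Finset (Sym2 V) × V)).filter
        (fun p => IsSF 1 p.1 ∧ s(u, p.2) ∈ p.1 ∧ Linked (p.1.erase s(u, p.2)) p.2 b ∧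
          ¬ Linked (p.1.erase s(u, p.2)) p.2 v),
      wt c p.1 =
      ∑ T ∈ Finset.univ.filter (IsSF 1),
        wt c T * ((Finset.univ.filter fun w : V => s(u, w) ∈ T ∧
          Linked (T.erase s(u, w)) w b ∧ ¬ Linked (T.erase s(u, w)) w v).card : ℝ) := by
    rw [Finset.sum_filter, Fintype.sum_prod_type, Finset.sum_filter]
    refine Finset.sum_congr rfl fun T _ => ?_
    by_cases h1 : IsSF 1 T
    · simp only [h1, true_and, if_true]
      rw [← Finset.sum_filter, Finset.sum_const, nsmul_eq_mul]
      ring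
    · simp [h1]
  have htreeD : ∑ p ∈ (Finset.univ : Finset (Finset (Sym2 V) × V)).filter
        (fun p => IsSF 1 p.1 ∧ s(u, p.2) ∈ p.1 ∧ ¬ Linked (p.1.erase s(u, p.2)) p.2 b ∧
          Linked (p.1.erase s(u, p.2)) p.2 v),
      wt c p.1 =
      ∑ T ∈ Finset.univ.filter (IsSF 1),
        wt c T * ((Finset.univ.filter fun w : V => s(u, w) ∈ T ∧
          ¬ Linked (T.erase s(u, w)) w b ∧ Linked (T.erase s(u, w)) w v).card : ℝ) := by
    rw [Finset.sum_filter, Fintype.sum_prod_type, Finset.sum_filter]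
    refine Finset.sum_congr rfl fun T _ => ?_
    by_cases h1 : IsSF 1 T
    · simp only [h1, true_and, if_true]
      rw [← Finset.sum_filter, Finset.sum_const, nsmul_eq_mul]
      ring
    · simp [h1]
  rw [htreeA, htreeD, ← Finset.sum_sub_distrib]
  -- step 5: per-tree count
  have : ∀ T ∈ Finset.univ.filter (IsSF 1),
      wt c T * ((Finset.univ.filter fun w : V => s(u, w) ∈ T ∧
          Linked (T.erase s(u, w)) w b ∧ ¬ Linked (T.erase s(u, w)) w v).card : ℝ) -
        wt c T * ((Finset.univ.filter fun w : V => s(u, w) ∈ T ∧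
          ¬ Linked (T.erase s(u, w)) w b ∧ Linked (T.erase s(u, w)) w v).card : ℝ) =
        wt c T * (if u = v then 1 else 0) := by
    intro T hT
    simp only [Finset.mem_filter] at hT
    rw [← mul_sub, tree_count hT.2 hub]
  rw [Finset.sum_congr rfl this]
  by_cases huv : u = v
  · simp [huv, kappa1]
  · simp [huv]

lemma Hfun_b (c : Sym2 V → ℝ) (b q : V) : Hfun c b b q = 0 := by
  unfold Hfun
  refine Finset.sum_eq_zero fun B _ => ?_
  simp [linked_refl B b]

lemma sum_subtype_ne (b : V) (f : V → ℝ) :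
    ∑ w : {w : V // w ≠ b}, f w.1 = (∑ w : V, f w) - f b := by
  haveI : Unique {x : V // ¬ (x ≠ b)} :=
    ⟨⟨⟨b, by simp⟩⟩, fun a => Subtype.ext (not_not.mp a.2)⟩
  have h := Fintype.sum_subtype_add_sum_subtype (fun w : V => w ≠ b) f
  have hu : ∑ i : {x : V // ¬ (x ≠ b)}, f i.1 = f b := by
    rw [Fintype.sum_unique (fun i : {x : V // ¬ (x ≠ b)} => f i.1)]
    exact congrArg f (not_not.mp (default : {x : V // ¬ (x ≠ b)}).2)
  rw [← h, hu]
  ring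

lemma dlap_mul_H (c : Sym2 V → ℝ) (b : V) :
    dlap c b * (Matrix.of fun p q : {w : V // w ≠ b} => Hfun c b p.1 q.1) =
      kappa1 c • (1 : Matrix {w : V // w ≠ b} {w : V // w ≠ b} ℝ) := by
  ext p q
  rw [Matrix.mul_apply, Matrix.smul_apply, smul_eq_mul]
  show ∑ w : {w : V // w ≠ b}, dlap c b p w * Hfun c b w.1 q.1 = _
  have hdl : ∀ w : {w : V // w ≠ b}, dlap c b p w = lap c p.1 w.1 := fun w => rfl
  simp only [hdl]
  rw [sum_subtype_ne b (fun w => lap c p.1 w * Hfun c b w q.1), Hfun_b, mul_zero, sub_zero,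
    core c b p.1 q.1 p.2]
  rw [Matrix.one_apply]
  by_cases hpq : p = q
  · simp [hpq]
  · have : ¬ (p.1 = q.1) := fun h => hpq (Subtype.ext h)
    simp [hpq, this]

lemma dlap_inv (c : Sym2 V → ℝ) (b : V) (hk : kappa1 c ≠ 0) :
    (dlap c b)⁻¹ =
      (kappa1 c)⁻¹ • (Matrix.of fun p q : {w : V // w ≠ b} => Hfun c b p.1 q.1) := by
  refine Matrix.inv_eq_right_inv ?_
  rw [Matrix.mul_smul, dlap_mul_H, smul_smul, inv_mul_cancel₀ hk, one_smul]

lemma exists_tree_subset : ∀ (B : Finset (Sym2 V)), ncomp B = 1 → ∃ T ⊆ B, IsSF 1 T := by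
  intro B
  induction B using Finset.strongInductionOn with | _ B ih =>
  intro hB
  by_cases hall : ∀ e ∈ B, ∀ x y : V, e = s(x, y) → ¬ Linked (B.erase e) x y
  · exact ⟨B, Finset.Subset.refl B, hB, by rw [← hB]; exact forest_rank hall⟩
  · push_neg at hall
    obtain ⟨e, he, x, y, hxy, hl⟩ := hall
    have hcongr : ncomp (B.erase e) = ncomp B := by
      refine (ncomp_congr fun a z => ?_).symm
      constructor
      · intro h
        subst hxy
        rw [← Finset.insert_erase he] at h
        exact (linked_insert_of_linked hl a z).mp h
      · exact linked_mono (Finset.erase_subset _ _)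
    obtain ⟨T, hT1, hT2⟩ := ih _ (Finset.erase_ssubset he) (hcongr.trans hB)
    exact ⟨T, hT1.trans (Finset.erase_subset _ _), hT2⟩

lemma kappa1_pos (c : Sym2 V → ℝ) (hc : ∀ e, 0 ≤ c e)
    (hconn : ncomp (Finset.univ.filter fun e : Sym2 V => c e ≠ 0) = 1) :
    0 < kappa1 c := by
  obtain ⟨T, hTsub, hT⟩ := exists_tree_subset _ hconn
  refine Finset.sum_pos' (fun B _ => Finset.prod_nonneg fun e _ => hc e) ⟨T, ?_, ?_⟩
  · simp [hT]
  · refine Finset.prod_pos fun e heT => ?_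
    have := hTsub heT
    simp only [Finset.mem_filter] at this
    exact lt_of_le_of_ne (hc e) (Ne.symm this.2)

lemma kappa2_pos (c : Sym2 V → ℝ) (hc : ∀ e, 0 ≤ c e)
    (hconn : ncomp (Finset.univ.filter fun e : Sym2 V => c e ≠ 0) = 1)
    (hn : 2 ≤ Fintype.card V) :
    0 < kappa2 c := by
  obtain ⟨T, hTsub, hT⟩ := exists_tree_subset _ hconn
  have hTne : T.Nonempty := by
    rw [← Finset.card_pos]
    have := hT.2
    omega
  obtain ⟨e, he⟩ := hTne
  refine Finset.sum_pos' (fun B _ => Finset.prod_nonneg fun e _ => hc e) ⟨T.erase e, ?_, ?_⟩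
  · induction e using Sym2.ind with | _ x y =>
    simp [tree_erase_2sf hT he]
  · refine Finset.prod_pos fun f hf => ?_
    have := hTsub (Finset.mem_of_mem_erase hf)
    simp only [Finset.mem_filter] at this
    exact lt_of_le_of_ne (hc f) (Ne.symm this.2)

lemma green_diag (c : Sym2 V → ℝ) (b v : V) (hv : v ≠ b) (hk : kappa1 c ≠ 0) :
    green c b v v = (kappa1 c)⁻¹ * Hfun c b v v := by
  unfold green
  rw [dif_neg hv, dif_neg hv, dlap_inv c b hk]
  simp [Matrix.smul_apply]

lemma sum_green (c : Sym2 V → ℝ) (b : V) (hk : kappa1 c ≠ 0) :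
    ∑ v : V, green c b v v = (kappa1 c)⁻¹ *
      ∑ B ∈ Finset.univ.filter (IsSF 2), wt c B * ((floating b B).card : ℝ) := by
  have h1 : ∑ v : {w : V // w ≠ b}, green c b v.1 v.1 = ∑ v : V, green c b v v := by
    rw [sum_subtype_ne b (fun v => green c b v v)]
    simp [green]
  rw [← h1]
  have h2 : ∀ v : {w : V // w ≠ b}, green c b v.1 v.1 = (kappa1 c)⁻¹ * Hfun c b v.1 v.1 :=
    fun v => green_diag c b v.1 v.2 hk
  rw [Finset.sum_congr rfl fun v _ => h2 v, ← Finset.mul_sum]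
  congr 1
  rw [sum_subtype_ne b (fun v => Hfun c b v v), Hfun_b, sub_zero]
  unfold Hfun
  rw [Finset.sum_comm]
  refine Finset.sum_congr rfl fun B _ => ?_
  have hpt : ∀ v : V, (if ¬ Linked B b v ∧ ¬ Linked B b v then wt c B else 0) =
      if v ∈ floating b B then wt c B else 0 := fun v => by
    simp [floating]
  rw [Finset.sum_congr rfl fun v _ => hpt v, Finset.sum_ite_mem, Finset.univ_inter,
    Finset.sum_const, nsmul_eq_mul, mul_comm]

end Lemmas

end TwoSF

open TwoSF

/-- For a finite connected undirected graph with positive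
conductances and marked vertex `b`, the expected number of vertices of the
floating component satisfies
`E(|Σ|) = ℓ* · (|V|/(|V|-1)) · R`, where `ℓ* = κ(|V|-1)/κ₂` and
`R = (1/|V|) Σ_v G_{v,v}`. -/
theorem statement_8 {V : Type*} [Fintype V] [DecidableEq V] (c : Sym2 V → ℝ)
    (hc : ∀ e, 0 ≤ c e) (hloop : ∀ v : V, c s(v, v) = 0)
    (hconn : ncomp (Finset.univ.filter fun e : Sym2 V => c e ≠ 0) = 1)
    (b : V) :
    expPow c b 1 =
      (kappa1 c * ((Fintype.card V : ℝ) - 1) / kappa2 c) *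
        ((Fintype.card V : ℝ) / ((Fintype.card V : ℝ) - 1)) *
        ((∑ v : V, green c b v v) / (Fintype.card V : ℝ)) := by
  classical
  have hn1 : 1 ≤ Fintype.card V := Fintype.card_pos_iff.mpr ⟨b⟩
  by_cases hcard : Fintype.card V = 1
  · have hempty : Finset.univ.filter (IsSF (V := V) 2) = ∅ := by
      rw [Finset.filter_eq_empty_iff]
      intro B _ hB
      have := hB.2
      omega
    have hk2 : kappa2 c = 0 := by rw [kappa2, hempty, Finset.sum_empty]
    rw [expPow, hk2, hcard]
    norm_num
  · have hn2 : 2 ≤ Fintype.card V := by omega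
    have hk1 : 0 < kappa1 c := kappa1_pos c hc hconn
    have hk2 : 0 < kappa2 c := kappa2_pos c hc hconn hn2
    have hS := sum_green c b hk1.ne'
    have hnR : ((Fintype.card V : ℝ) - 1) ≠ 0 := by
      have h2 : (2 : ℝ) ≤ (Fintype.card V : ℝ) := by exact_mod_cast hn2
      linarith
    have hn0 : (Fintype.card V : ℝ) ≠ 0 := by
      have h2 : (2 : ℝ) ≤ (Fintype.card V : ℝ) := by exact_mod_cast hn2
      linarith
    have hsum : ∑ B ∈ Finset.univ.filter (IsSF 2),
        wt c B * ((floating b B).card : ℝ) ^ 1 =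
        kappa1 c * ∑ v : V, green c b v v := by
      simp only [pow_one]
      rw [hS, ← mul_assoc, mul_inv_cancel₀ hk1.ne', one_mul]
    rw [expPow, hsum]
    field_simp
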